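/- In the ring of formal power series ℚ[[X]], let B be the power series whose k-th coefficient is b_k = C(5k+1, k)/(5k+1) (where C denotes the binomial coefficient). Then X·B⁵ = B − 1. Equivalently, the formal power series u = −B = −∑_{k≥0} b_k X^k satisfies X·u⁵ − u − 1 = 0, so the coefficients of the regular perturbation series for the root of εu⁵ − u − 1 = 0 near −1 are given by u_k = −C(5k+1,k)/(5k+1). -/

import Mathlib

open Finset PowerSeries

/-- Two-parameter Fuss–Catalan numbers: coefficients of `B^r`. -/
noncomputable def fc (r n : ℕ) : ℚ :=
  if r = 0 then (if n = 0 then 1 else 0)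
  else (r : ℚ) / (5 * n + r) * ((5 * n + r).choose n)

lemma fc_zero (n : ℕ) : fc 0 n = if n = 0 then 1 else 0 := rfl

lemma fc_zero_eq (n : ℕ) :
    fc 0 (n + 1) = (0 : ℚ) / (5 * (n + 1) + 0) * ((5 * (n + 1) + 0).choose (n + 1)) := by
  simp [fc]

/-- uniform closed form for positive n -/
lemma fc_eq (r n : ℕ) :
    fc r (n + 1) = (r : ℚ) / (5 * (n + 1) + r) * ((5 * (n + 1) + r).choose (n + 1)) := by
  cases r with
  | zero => simp [fc]
  | succ r => simp [fc]

lemma fc_n_zero (r : ℕ) : fc r 0 = 1 := by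
  cases r with
  | zero => simp [fc]
  | succ r =>
      have h : ((r : ℚ) + 1) ≠ 0 := by positivity
      simp [fc]
      field_simp
      exact h

/-- The key two-term recurrence `fc (r+1) (n+1) = fc r (n+1) + fc (r+5) n`. -/
lemma fc_rec (r n : ℕ) : fc (r + 1) (n + 1) = fc r (n + 1) + fc (r + 5) n := by
  -- abbreviations
  set M : ℕ := 5 * n + r + 5 with hM
  have key : ((5 * n + r + 5).choose (n + 1) : ℚ) * (n + 1) =
      ((5 * n + r + 5).choose n) * (4 * n + r + 5) := by
    have := Nat.choose_succ_right_eq (5 * n + r + 5) n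
    have hsub : 5 * n + r + 5 - n = 4 * n + r + 5 := by omega
    rw [hsub] at this
    exact_mod_cast congrArg (Nat.cast : ℕ → ℚ) this
  have pascal : ((5 * n + r + 6).choose (n + 1) : ℚ) =
      ((5 * n + r + 5).choose (n + 1)) + ((5 * n + r + 5).choose n) := by
    have : (5 * n + r + 6).choose (n + 1) =
        (5 * n + r + 5).choose n + (5 * n + r + 5).choose (n + 1) :=
      Nat.choose_succ_succ (5 * n + r + 5) n
    push_cast [this]; ring
  rw [fc_eq (r + 1) n, fc_eq r n]
  have hfc5 : fc (r + 5) n = ((r : ℚ) + 5) / (5 * n + r + 5) * ((5 * n + r + 5).choose n) := by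
    cases n with
    | zero => rw [fc_n_zero]
              have h5 : ((r : ℚ) + 5) ≠ 0 := by positivity
              simp
              field_simp
    | succ m => rw [fc_eq (r + 5) m]
                push_cast
                ring_nf
  rw [hfc5]
  have harith1 : ((5 * (n + 1) + (r + 1) : ℕ) : ℚ) = 5 * n + r + 6 := by push_cast; ring
  have harith2 : ((5 * (n + 1) + r : ℕ) : ℚ) = 5 * n + r + 5 := by push_cast; ring
  have hch1 : (5 * (n + 1) + (r + 1) : ℕ) = 5 * n + r + 6 := by omega
  have hch2 : (5 * (n + 1) + r : ℕ) = 5 * n + r + 5 := by omega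
  rw [hch1, hch2]
  push_cast
  rw [pascal]
  have h1 : (5 * (n : ℚ) + r + 6) ≠ 0 := by positivity
  have h2 : (5 * (n : ℚ) + r + 5) ≠ 0 := by positivity
  have h3 : ((n : ℚ) + 1) ≠ 0 := by positivity
  field_simp
  nlinarith [key, sq_nonneg ((5 * (n:ℚ) + r + 5))]

/-- Convolution identity: `B · B^r = B^(r+1)` coefficient-wise. -/
lemma fc_conv : ∀ n r : ℕ,
    (∑ k ∈ range (n + 1), fc 1 k * fc r (n - k)) = fc (r + 1) n := by
  intro n
  induction n with
  | zero =>
      intro r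
      simp [fc_n_zero]
  | succ n ih =>
      intro r
      induction r with
      | zero =>
          rw [Finset.sum_range_succ]
          have h0 : ∀ k ∈ range (n + 1), fc 1 k * fc 0 (n + 1 - k) = 0 := by
            intro k hk
            have : n + 1 - k ≠ 0 := by simp at hk; omega
            simp [fc_zero, this]
          rw [Finset.sum_eq_zero h0]
          simp [fc_n_zero]
      | succ r ihr =>
          have expand : (∑ k ∈ range (n + 2), fc 1 k * fc (r + 1) (n + 1 - k))
              = (∑ k ∈ range (n + 2), fc 1 k * fc r (n + 1 - k))
                + (∑ k ∈ range (n + 1), fc 1 k * fc (r + 5) (n - k)) := by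
            rw [Finset.sum_range_succ, Finset.sum_range_succ (f := fun k => fc 1 k * fc r (n + 1 - k))]
            have hpt : ∀ k ∈ range (n + 1), fc 1 k * fc (r + 1) (n + 1 - k)
                = fc 1 k * fc r (n + 1 - k) + fc 1 k * fc (r + 5) (n - k) := by
              intro k hk
              simp only [Finset.mem_range] at hk
              have h1 : n + 1 - k = (n - k) + 1 := by omega
              rw [h1, fc_rec r (n - k)]
              ring
            rw [Finset.sum_congr rfl hpt, Finset.sum_add_distrib, Nat.sub_self, fc_n_zero, fc_n_zero]
            ring
          rw [expand, ihr, ih (r + 5), fc_rec (r + 1) n]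

/-- Powers of the Fuss–Catalan series. -/
lemma fc_pow : ∀ r : ℕ, (PowerSeries.mk (fc 1)) ^ (r + 1) = PowerSeries.mk (fc (r + 1)) := by
  intro r
  induction r with
  | zero => simp
  | succ r ih =>
      rw [pow_succ' (PowerSeries.mk (fc 1)) (r + 1), ih]
      ext n
      rw [PowerSeries.coeff_mul, Finset.Nat.sum_antidiagonal_eq_sum_range_succ_mk]
      simpa using fc_conv n (r + 1)

lemma mkB_eq : (PowerSeries.mk fun k => ((5*k+1).choose k : ℚ) / (5*k+1)) = PowerSeries.mk (fc 1) := by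
  ext n
  simp [fc, PowerSeries.coeff_mk]
  ring_nf

/-- Let `B ∈ ℚ[[X]]` have `k`-th coefficient `C(5k+1,k)/(5k+1)` (Fuss–Catalan).
Then `X·B⁵ = B − 1`; equivalently `u = −B` satisfies `X·u⁵ − u − 1 = 0`, so
the regular perturbation series for the root of `εu⁵ − u − 1 = 0` near `−1`
has coefficients `u_k = −C(5k+1,k)/(5k+1)`. -/
theorem stmt4 :
    PowerSeries.X * (PowerSeries.mk fun k => ((5*k+1).choose k : ℚ) / (5*k+1))^5
      = (PowerSeries.mk fun k => ((5*k+1).choose k : ℚ) / (5*k+1)) - 1 := by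
  rw [mkB_eq]
  have h5 : (PowerSeries.mk (fc 1)) ^ 5 = PowerSeries.mk (fc 5) := fc_pow 4
  rw [h5]
  ext n
  cases n with
  | zero =>
      simp [fc_n_zero, PowerSeries.coeff_zero_eq_constantCoeff]
  | succ n =>
      rw [PowerSeries.coeff_succ_X_mul]
      have hrec := fc_rec 0 n
      rw [fc_zero_eq] at hrec
      simp at hrec
      simp [PowerSeries.coeff_mk, PowerSeries.coeff_one]
      rw [← hrec]
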